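/- Let a ≥ 1 and let P₁ = (0,0), P₂ = (a,0), P₃ = (0,1), P₄ = (a,1) be the four corners of an a × 1 rectangle in the Euclidean plane. Then the infimum over all pairs of points (X₁, X₂) ∈ ℝ² × ℝ² of ∑_{i=1}^{4} min{ d(X₁, Pᵢ), d(X₂, Pᵢ) } equals min{ 2, √(a² + a√3 + 1) }, where d denotes Euclidean distance. -/

import Mathlib

/-- Euclidean distance in the plane. -/
noncomputable def d (X Y : ℝ × ℝ) : ℝ :=
  Real.sqrt ((X.1 - Y.1) ^ 2 + (X.2 - Y.2) ^ 2)

lemma d_nonneg (X Y : ℝ × ℝ) : 0 ≤ d X Y := Real.sqrt_nonneg _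

lemma key' (u v w1 w2 V : ℝ) (h : w1^2 + w2^2 = V^2) (hV : 0 ≤ V) :
    w1*u + w2*v ≤ V * Real.sqrt (u^2 + v^2) := by
  have hs := Real.sqrt_nonneg (u^2+v^2)
  have hsq : Real.sqrt (u^2+v^2) ^ 2 = u^2+v^2 := Real.sq_sqrt (by positivity)
  nlinarith [sq_nonneg (w1*v - w2*u), mul_nonneg hV hs,
    sq_nonneg (w1*u + w2*v - V*Real.sqrt (u^2+v^2)),
    sq_nonneg (w1*u + w2*v + V*Real.sqrt (u^2+v^2))]

lemma d_tri (X P Q : ℝ × ℝ) : d P Q ≤ d X P + d X Q := by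
  have h0 : 0 ≤ d P Q := d_nonneg P Q
  have hV2 : (d P Q)^2 = (P.1-Q.1)^2 + (P.2-Q.2)^2 := Real.sq_sqrt (by positivity)
  have k1 := key' (X.1-P.1) (X.2-P.2) (Q.1-P.1) (Q.2-P.2) (d P Q) (by linear_combination -hV2) h0
  have k2 := key' (X.1-Q.1) (X.2-Q.2) (P.1-Q.1) (P.2-Q.2) (d P Q) (by linear_combination -hV2) h0
  have e1 : Real.sqrt ((X.1-P.1)^2 + (X.2-P.2)^2) = d X P := rfl
  have e2 : Real.sqrt ((X.1-Q.1)^2 + (X.2-Q.2)^2) = d X Q := rfl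
  rw [e1] at k1; rw [e2] at k2
  rcases eq_or_lt_of_le h0 with h|h
  · have := d_nonneg X P; have := d_nonneg X Q; linarith
  · nlinarith [k1, k2, hV2, h]

lemma fermat0 (a x y : ℝ) (ha : 0 ≤ a) :
    Real.sqrt (a^2 + a*Real.sqrt 3 + 1) ≤
      Real.sqrt (x^2 + y^2) + Real.sqrt ((x-a)^2 + y^2) + Real.sqrt (x^2 + (y-1)^2) := by
  set r := Real.sqrt 3 with hrdef
  have hr : r^2 = 3 := Real.sq_sqrt (by norm_num)
  have hr0 : 0 < r := Real.sqrt_pos.mpr (by norm_num)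
  have hVpos : (0:ℝ) < a^2 + a*r + 1 := by nlinarith
  set V := Real.sqrt (a^2 + a*r + 1) with hVdef
  have hV : V^2 = a^2 + a*r + 1 := Real.sq_sqrt hVpos.le
  have hV0 : 0 < V := Real.sqrt_pos.mpr hVpos
  have k1 := key' x y (a+r) (1+r*a) (2*V) (by linear_combination (1+a^2)*hr - 4*hV) (by positivity)
  have k2 := key' (x-a) y (-(2*a+r)) 1 (2*V) (by linear_combination hr - 4*hV) (by positivity)
  have k3 := key' x (y-1) a (-(r*a+2)) (2*V) (by linear_combination a^2*hr - 4*hV) (by positivity)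
  have hsum : 2*V^2 ≤ 2*V*(Real.sqrt (x^2+y^2) + Real.sqrt ((x-a)^2+y^2) + Real.sqrt (x^2+(y-1)^2)) := by
    nlinarith [k1, k2, k3, hV]
  nlinarith [hsum, hV0]

lemma fermat_attain (a : ℝ) (ha : 1 ≤ a) :
    ∃ F : ℝ × ℝ, d F (0,0) + d F (a,0) + d F (0,1) = Real.sqrt (a^2 + a*Real.sqrt 3 + 1) := by
  set r := Real.sqrt 3 with hrdef
  have hr : r^2 = 3 := Real.sq_sqrt (by norm_num)
  have hr0 : 0 < r := Real.sqrt_pos.mpr (by norm_num)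
  have ha0 : (0:ℝ) < a := by linarith
  have hVpos : (0:ℝ) < a^2 + a*r + 1 := by nlinarith
  set V := Real.sqrt (a^2 + a*r + 1) with hVdef
  have hV : V^2 = a^2 + a*r + 1 := Real.sq_sqrt hVpos.le
  have hV0 : 0 < V := Real.sqrt_pos.mpr hVpos
  have hW : ∀ t : ℝ, (t/(r*V))^2 = t^2/(r^2*(a^2+a*r+1)) := by
    intro t; rw [div_pow, mul_pow, hV]
  refine ⟨(a*(a+r)/(2*r*(a^2+a*r+1)), a*(1+r*a)/(2*r*(a^2+a*r+1))), ?_⟩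
  have e1 : (a*(a+r)/(2*r*(a^2+a*r+1)) - 0)^2 + (a*(1+r*a)/(2*r*(a^2+a*r+1)) - 0)^2
      = (a/(r*V))^2 := by
    rw [hW]; field_simp; ring_nf
    linear_combination (1*a^2*r^0 + 1*a^4*r^0)*hr
  have e2 : (a*(a+r)/(2*r*(a^2+a*r+1)) - a)^2 + (a*(1+r*a)/(2*r*(a^2+a*r+1)) - 0)^2
      = (a*(1+r*a)/(r*V))^2 := by
    rw [hW]; field_simp; ring_nf
    linear_combination (1*a^2*r^0 + 4*a^3*r^1 + 1*a^4*r^0 + 4*a^4*r^2 + 4*a^5*r^1)*hr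
  have e3 : (a*(a+r)/(2*r*(a^2+a*r+1)) - 0)^2 + (a*(1+r*a)/(2*r*(a^2+a*r+1)) - 1)^2
      = ((a+r)/(r*V))^2 := by
    rw [hW]; field_simp; ring_nf
    linear_combination (4*a^1*r^1 + 1*a^2*r^0 + 4*a^2*r^2 + 4*a^3*r^1 + 1*a^4*r^0)*hr
  show Real.sqrt _ + Real.sqrt _ + Real.sqrt _ = V
  rw [e1, e2, e3, Real.sqrt_sq (by positivity), Real.sqrt_sq (by positivity),
    Real.sqrt_sq (by positivity)]
  field_simp
  linear_combination (-a)*hr + (-r)*hV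

lemma lower_bound (a : ℝ) (ha : 1 ≤ a) (X Y : ℝ × ℝ) :
    min 2 (Real.sqrt (a^2 + a*Real.sqrt 3 + 1)) ≤
      min (d X (0, 0)) (d Y (0, 0)) + min (d X (a, 0)) (d Y (a, 0)) +
        min (d X (0, 1)) (d Y (0, 1)) + min (d X (a, 1)) (d Y (a, 1)) := by
  have ha0 : (0:ℝ) ≤ a := by linarith
  set V := Real.sqrt (a^2 + a*Real.sqrt 3 + 1) with hVdef
  have hm2 : min 2 V ≤ 2 := min_le_left _ _
  have hmV : min 2 V ≤ V := min_le_right _ _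
  -- pair distance constants
  have c13 : d ((0:ℝ),(0:ℝ)) ((0:ℝ),(1:ℝ)) = 1 := by
    simp [d]
  have c24 : d ((a:ℝ),(0:ℝ)) ((a:ℝ),(1:ℝ)) = 1 := by
    simp [d]
  have c12 : d ((0:ℝ),(0:ℝ)) ((a:ℝ),(0:ℝ)) = a := by
    simp only [d]
    rw [show ((0:ℝ)-a)^2 + ((0:ℝ)-0)^2 = a^2 by ring, Real.sqrt_sq ha0]
  have c34 : d ((0:ℝ),(1:ℝ)) ((a:ℝ),(1:ℝ)) = a := by
    simp only [d]
    rw [show ((0:ℝ)-a)^2 + ((1:ℝ)-1)^2 = a^2 by ring, Real.sqrt_sq ha0]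
  have c14 : (1:ℝ) ≤ d ((0:ℝ),(0:ℝ)) ((a:ℝ),(1:ℝ)) := by
    simp only [d]
    rw [show (1:ℝ) = Real.sqrt 1 by simp]
    exact Real.sqrt_le_sqrt (by nlinarith)
  have c23 : (1:ℝ) ≤ d ((a:ℝ),(0:ℝ)) ((0:ℝ),(1:ℝ)) := by
    simp only [d]
    rw [show (1:ℝ) = Real.sqrt 1 by simp]
    exact Real.sqrt_le_sqrt (by nlinarith)
  -- fermat bounds for every 3-subset, for any point Z
  have f123 : ∀ Z : ℝ × ℝ, V ≤ d Z (0,0) + d Z (a,0) + d Z (0,1) := by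
    intro Z
    have h := fermat0 a Z.1 Z.2 ha0
    simpa [d] using h
  have f124 : ∀ Z : ℝ × ℝ, V ≤ d Z (0,0) + d Z (a,0) + d Z (a,1) := by
    intro Z
    have h := fermat0 a (a - Z.1) Z.2 ha0
    rw [show (a-Z.1-a)^2 = (Z.1-0)^2 by ring, show (a-Z.1)^2 = (Z.1-a)^2 by ring,
      show Z.2^2 = (Z.2-0)^2 by ring] at h
    simp only [d]
    linarith [h]
  have f134 : ∀ Z : ℝ × ℝ, V ≤ d Z (0,0) + d Z (0,1) + d Z (a,1) := by
    intro Z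
    have h := fermat0 a Z.1 (1 - Z.2) ha0
    rw [show (1-Z.2-1)^2 = (Z.2-0)^2 by ring, show (1-Z.2)^2 = (Z.2-1)^2 by ring,
      show Z.1^2 = (Z.1-0)^2 by ring] at h
    simp only [d]
    linarith [h]
  have f234 : ∀ Z : ℝ × ℝ, V ≤ d Z (a,0) + d Z (0,1) + d Z (a,1) := by
    intro Z
    have h := fermat0 a (a - Z.1) (1 - Z.2) ha0
    rw [show (a-Z.1-a)^2 = (Z.1-0)^2 by ring, show (a-Z.1)^2 = (Z.1-a)^2 by ring,
      show (1-Z.2-1)^2 = (Z.2-0)^2 by ring, show (1-Z.2)^2 = (Z.2-1)^2 by ring] at h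
    simp only [d]
    linarith [h]
  -- pair bounds
  have p13 : ∀ Z : ℝ × ℝ, (1:ℝ) ≤ d Z (0,0) + d Z (0,1) := fun Z => by
    have h := d_tri Z ((0:ℝ),(0:ℝ)) ((0:ℝ),(1:ℝ)); rw [c13] at h; exact h
  have p24 : ∀ Z : ℝ × ℝ, (1:ℝ) ≤ d Z (a,0) + d Z (a,1) := fun Z => by
    have h := d_tri Z ((a:ℝ),(0:ℝ)) ((a:ℝ),(1:ℝ)); rw [c24] at h; exact h
  have p12 : ∀ Z : ℝ × ℝ, a ≤ d Z (0,0) + d Z (a,0) := fun Z => by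
    have h := d_tri Z ((0:ℝ),(0:ℝ)) ((a:ℝ),(0:ℝ)); rw [c12] at h; exact h
  have p34 : ∀ Z : ℝ × ℝ, a ≤ d Z (0,1) + d Z (a,1) := fun Z => by
    have h := d_tri Z ((0:ℝ),(1:ℝ)) ((a:ℝ),(1:ℝ)); rw [c34] at h; exact h
  have p14 : ∀ Z : ℝ × ℝ, (1:ℝ) ≤ d Z (0,0) + d Z (a,1) := fun Z => le_trans c14 (d_tri Z _ _)
  have p23 : ∀ Z : ℝ × ℝ, (1:ℝ) ≤ d Z (a,0) + d Z (0,1) := fun Z => le_trans c23 (d_tri Z _ _)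
  rcases min_cases (d X ((0:ℝ),(0:ℝ))) (d Y (0,0)) with ⟨h1,-⟩|⟨h1,-⟩ <;>
  rcases min_cases (d X ((a:ℝ),(0:ℝ))) (d Y (a,0)) with ⟨h2,-⟩|⟨h2,-⟩ <;>
  rcases min_cases (d X ((0:ℝ),(1:ℝ))) (d Y (0,1)) with ⟨h3,-⟩|⟨h3,-⟩ <;>
  rcases min_cases (d X ((a:ℝ),(1:ℝ))) (d Y (a,1)) with ⟨h4,-⟩|⟨h4,-⟩ <;>
  rw [h1, h2, h3, h4] <;>
  linarith [f123 X, f123 Y, f124 X, f124 Y, f134 X, f134 Y, f234 X, f234 Y,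
    p13 X, p13 Y, p24 X, p24 Y, p12 X, p12 Y, p34 X, p34 Y, p14 X, p14 Y, p23 X, p23 Y,
    d_nonneg X ((0:ℝ),(0:ℝ)), d_nonneg Y ((0:ℝ),(0:ℝ)), d_nonneg X ((a:ℝ),(0:ℝ)),
    d_nonneg Y ((a:ℝ),(0:ℝ)), d_nonneg X ((0:ℝ),(1:ℝ)), d_nonneg Y ((0:ℝ),(1:ℝ)),
    d_nonneg X ((a:ℝ),(1:ℝ)), d_nonneg Y ((a:ℝ),(1:ℝ))]


/-- For `a ≥ 1`, the optimal planar 2-median objective for the four corners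
of an `a × 1` rectangle equals `min {2, √(a² + a√3 + 1)}`. -/
theorem two_median_rectangle (a : ℝ) (ha : 1 ≤ a) :
    (⨅ X : (ℝ × ℝ) × (ℝ × ℝ),
        min (d X.1 (0, 0)) (d X.2 (0, 0)) + min (d X.1 (a, 0)) (d X.2 (a, 0)) +
          min (d X.1 (0, 1)) (d X.2 (0, 1)) + min (d X.1 (a, 1)) (d X.2 (a, 1))) =
      min 2 (Real.sqrt (a ^ 2 + a * Real.sqrt 3 + 1)) := by
  have hbdd : BddBelow (Set.range fun X : (ℝ × ℝ) × (ℝ × ℝ) =>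
      min (d X.1 (0, 0)) (d X.2 (0, 0)) + min (d X.1 (a, 0)) (d X.2 (a, 0)) +
        min (d X.1 (0, 1)) (d X.2 (0, 1)) + min (d X.1 (a, 1)) (d X.2 (a, 1))) := by
    refine ⟨0, ?_⟩
    rintro x ⟨X, rfl⟩
    have h1 := le_min (d_nonneg X.1 ((0:ℝ),(0:ℝ))) (d_nonneg X.2 ((0:ℝ),(0:ℝ)))
    have h2 := le_min (d_nonneg X.1 ((a:ℝ),(0:ℝ))) (d_nonneg X.2 ((a:ℝ),(0:ℝ)))
    have h3 := le_min (d_nonneg X.1 ((0:ℝ),(1:ℝ))) (d_nonneg X.2 ((0:ℝ),(1:ℝ)))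
    have h4 := le_min (d_nonneg X.1 ((a:ℝ),(1:ℝ))) (d_nonneg X.2 ((a:ℝ),(1:ℝ)))
    dsimp only
    linarith
  apply le_antisymm
  · apply le_min
    · -- value at the two edge midpoints is ≤ 2
      refine le_trans (ciInf_le hbdd (((0, 1/2), (a, 1/2)) : (ℝ × ℝ) × (ℝ × ℝ))) ?_
      dsimp only
      have e1 : d ((0:ℝ),(1:ℝ)/2) ((0:ℝ),(0:ℝ)) = 1/2 := by
        simp only [d]
        rw [show ((0:ℝ)-0)^2 + ((1:ℝ)/2-0)^2 = (1/2)^2 by norm_num,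
          Real.sqrt_sq (by norm_num)]
      have e2 : d ((a:ℝ),(1:ℝ)/2) ((a:ℝ),(0:ℝ)) = 1/2 := by
        simp only [d]
        rw [show ((a:ℝ)-a)^2 + ((1:ℝ)/2-0)^2 = (1/2)^2 by norm_num,
          Real.sqrt_sq (by norm_num)]
      have e3 : d ((0:ℝ),(1:ℝ)/2) ((0:ℝ),(1:ℝ)) = 1/2 := by
        simp only [d]
        rw [show ((0:ℝ)-0)^2 + ((1:ℝ)/2-1)^2 = (1/2)^2 by norm_num,
          Real.sqrt_sq (by norm_num)]
      have e4 : d ((a:ℝ),(1:ℝ)/2) ((a:ℝ),(1:ℝ)) = 1/2 := by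
        simp only [d]
        rw [show ((a:ℝ)-a)^2 + ((1:ℝ)/2-1)^2 = (1/2)^2 by norm_num,
          Real.sqrt_sq (by norm_num)]
      rw [e1, e2, e3, e4]
      have m1 := min_le_left ((1:ℝ)/2) (d ((a:ℝ),(1:ℝ)/2) ((0:ℝ),(0:ℝ)))
      have m2 := min_le_right (d ((0:ℝ),(1:ℝ)/2) ((a:ℝ),(0:ℝ))) ((1:ℝ)/2)
      have m3 := min_le_left ((1:ℝ)/2) (d ((a:ℝ),(1:ℝ)/2) ((0:ℝ),(1:ℝ)))
      have m4 := min_le_right (d ((0:ℝ),(1:ℝ)/2) ((a:ℝ),(1:ℝ))) ((1:ℝ)/2)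
      linarith
    · -- value at (Fermat point, fourth corner) is ≤ √(a² + a√3 + 1)
      obtain ⟨F, hF⟩ := fermat_attain a ha
      refine le_trans (ciInf_le hbdd ((F, (a, 1)) : (ℝ × ℝ) × (ℝ × ℝ))) ?_
      dsimp only
      have e4 : d ((a:ℝ),(1:ℝ)) ((a:ℝ),(1:ℝ)) = 0 := by
        simp [d]
      have m1 := min_le_left (d F ((0:ℝ),(0:ℝ))) (d ((a:ℝ),(1:ℝ)) ((0:ℝ),(0:ℝ)))
      have m2 := min_le_left (d F ((a:ℝ),(0:ℝ))) (d ((a:ℝ),(1:ℝ)) ((a:ℝ),(0:ℝ)))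
      have m3 := min_le_left (d F ((0:ℝ),(1:ℝ))) (d ((a:ℝ),(1:ℝ)) ((0:ℝ),(1:ℝ)))
      rw [e4]
      have m4 := min_le_right (d F ((a:ℝ),(1:ℝ))) (0:ℝ)
      linarith [hF.ge, hF.le]
  · exact le_ciInf fun X => lower_bound a ha X.1 X.2
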